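/- Let N ≥ 1 and let P be a coherent exchangeable lower prevision on ℒ(𝒳^N), with count distribution Q on ℒ(𝒩^N) defined by Q(h) := P(h∘T^N). Then for every gamble f on 𝒳^N: P(f) = Q(m ↦ MuHy^N(f|m)). -/

import Mathlib

open Finset Filter Topology

/-- A coherent lower prevision on the gambles over a finite nonempty space `Ω`. -/
def LowerPrevCoherent {Ω : Type*} [Fintype Ω] [Nonempty Ω] (P : (Ω → ℝ) → ℝ) : Prop :=
  (∀ f : Ω → ℝ, sInf (Set.range f) ≤ P f) ∧
  (∀ (f : Ω → ℝ) (l : ℝ), 0 ≤ l → P (fun ω => l * f ω) = l * P f) ∧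
  (∀ f g : Ω → ℝ, P f + P g ≤ P (f + g))

/-- A linear prevision on the gambles over a finite nonempty space `Ω`. -/
def LinearPrevision {Ω : Type*} [Fintype Ω] [Nonempty Ω] (P : (Ω → ℝ) → ℝ) : Prop :=
  (∀ f g : Ω → ℝ, P (f + g) = P f + P g) ∧
  (∀ (l : ℝ) (f : Ω → ℝ), P (fun ω => l * f ω) = l * P f) ∧
  (∀ f : Ω → ℝ, (∀ ω, 0 ≤ f ω) → 0 ≤ P f) ∧
  P (fun _ => 1) = 1

/-- Exchangeability of a lower prevision on gambles on `X^N`: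
`P (πf − f) ≥ 0` for every gamble `f` and every permutation `π`. -/
def Exchangeable {X : Type*} {N : ℕ} (P : ((Fin N → X) → ℝ) → ℝ) : Prop :=
  ∀ (f : (Fin N → X) → ℝ) (π : Equiv.Perm (Fin N)),
    0 ≤ P (fun x => f (fun k => x (π k)) - f x)

/-- The set of count vectors `𝒩^n`. -/
abbrev CVec (X : Type*) [Fintype X] (n : ℕ) : Type _ := {m : X → ℕ // ∑ x, m x = n}

noncomputable instance {X : Type*} [Fintype X] [DecidableEq X] (n : ℕ) : Fintype (CVec X n) := by
  have key : ∀ (m : CVec X n) (x : X), m.1 x < n + 1 := by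
    intro m x
    have h1 : m.1 x ≤ ∑ y, m.1 y :=
      Finset.single_le_sum (fun i _ => Nat.zero_le _) (Finset.mem_univ x)
    have h2 := m.2
    omega
  exact Fintype.ofInjective (fun m : CVec X n => fun x => (⟨m.1 x, key m x⟩ : Fin (n+1)))
    (fun a b hab => Subtype.ext (funext fun x => congrArg Fin.val (congrFun hab x)))

instance {X : Type*} [Fintype X] [DecidableEq X] [Nonempty X] (n : ℕ) :
    Nonempty (CVec X n) :=
  ⟨⟨fun x => if x = Classical.arbitrary X then n else 0, by simp⟩⟩

/-- The counting map `T^n : X^n → 𝒩^n`. -/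
def countMap {X : Type*} [Fintype X] [DecidableEq X] (n : ℕ) (z : Fin n → X) : CVec X n :=
  ⟨fun x => (Finset.univ.filter fun k => z k = x).card, by
    have h := Finset.card_eq_sum_card_fiberwise (f := z) (s := Finset.univ) (t := Finset.univ)
      (fun k _ => Finset.mem_univ (z k))
    simpa using h.symm⟩

/-- `ν(m) = n!/∏ₓ mₓ!` for a count vector `m ∈ 𝒩^n`. -/
def nu {X : Type*} [Fintype X] {n : ℕ} (m : CVec X n) : ℕ :=
  Nat.multinomial Finset.univ m.1

/-- `ν(μ − m)`, which is `0` unless `m ≤ μ` componentwise. -/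
def nuSub {X : Type*} [Fintype X] {n k : ℕ} (μ : CVec X (n + k)) (m : CVec X n) : ℕ :=
  if ∀ x, m.1 x ≤ μ.1 x then Nat.multinomial Finset.univ (fun x => μ.1 x - m.1 x) else 0

/-- The multiple hyper-geometric prevision `MuHy^n(f|m) = (1/ν(m)) ∑_{z∈[m]} f(z)`. -/
noncomputable def MuHy {X : Type*} [Fintype X] [DecidableEq X] {n : ℕ}
    (f : (Fin n → X) → ℝ) (m : CVec X n) : ℝ :=
  (∑ z ∈ Finset.univ.filter fun z : Fin n → X => countMap n z = m, f z) / (nu m : ℝ)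

/-- The `X`-simplex `Σ_X`, as a subtype of `X → ℝ`. -/
abbrev SimplexPt (X : Type*) [Fintype X] : Type _ :=
  {θ : X → ℝ // (∀ x, 0 ≤ θ x) ∧ ∑ x, θ x = 1}

/-- The Bernstein basis polynomial `B_m(θ) = ν(m) ∏ₓ θₓ^{mₓ}`. -/
noncomputable def Bern {X : Type*} [Fintype X] {n : ℕ} (m : CVec X n) (θ : X → ℝ) : ℝ :=
  (nu m : ℝ) * ∏ x, θ x ^ m.1 x

/-- The count multinomial expectation `CoMn^n(g|θ) = ∑_m g(m) B_m(θ)`. -/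
noncomputable def CoMn {X : Type*} [Fintype X] [DecidableEq X] {n : ℕ} (g : CVec X n → ℝ) (θ : X → ℝ) : ℝ :=
  ∑ m : CVec X n, g m * Bern m θ

/-- The multinomial expectation `Mn^n(f|θ) = ∑_z f(z) ∏ₓ θₓ^{Tₓ(z)}`. -/
noncomputable def Mn {X : Type*} [Fintype X] [DecidableEq X] {n : ℕ}
    (f : (Fin n → X) → ℝ) (θ : X → ℝ) : ℝ :=
  ∑ z : Fin n → X, f z * ∏ x, θ x ^ (countMap n z).1 x

/-- `CoMn^n(g|·)` as a function on the simplex. -/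
noncomputable def CoMnP {X : Type*} [Fintype X] [DecidableEq X] {n : ℕ} (g : CVec X n → ℝ)
    (θ : SimplexPt X) : ℝ :=
  CoMn g θ.1

/-- `Mn^n(f|·)` as a function on the simplex. -/
noncomputable def MnP {X : Type*} [Fintype X] [DecidableEq X] {n : ℕ}
    (f : (Fin n → X) → ℝ) (θ : SimplexPt X) : ℝ :=
  Mn f θ.1

/-- Polynomial gambles on the simplex: the set `𝒱(Σ_X)`. -/
def IsPolyGamble {X : Type*} [Fintype X] [DecidableEq X] (p : SimplexPt X → ℝ) : Prop :=
  ∃ n : ℕ, 1 ≤ n ∧ ∃ g : CVec X n → ℝ, p = fun θ => CoMnP g θ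

/-- Coherence of a functional on the linear space `𝒱(Σ_X)` of polynomial gambles. -/
def CoherentOnPoly {X : Type*} [Fintype X] [DecidableEq X] (S : (SimplexPt X → ℝ) → ℝ) : Prop :=
  (∀ p, IsPolyGamble p → sInf (Set.range p) ≤ S p) ∧
  (∀ p, IsPolyGamble p → ∀ l : ℝ, 0 ≤ l → S (fun θ => l * p θ) = l * S p) ∧
  (∀ p q, IsPolyGamble p → IsPolyGamble q → S p + S q ≤ S (p + q))

/-- Cylindrical extension of a gamble on `X^n` to `X^{n+k}`. -/
def cylExt {X : Type*} {n k : ℕ} (f : (Fin n → X) → ℝ) : (Fin (n + k) → X) → ℝ :=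
  fun z => f fun i => z (Fin.castLE (Nat.le_add_right n k) i)

/-- Time consistency of a family of lower previsions on the `X^n`. -/
def PTimeConsistent {X : Type*} (P : ∀ n : ℕ, ((Fin n → X) → ℝ) → ℝ) : Prop :=
  ∀ n : ℕ, 1 ≤ n → ∀ (k : ℕ) (f : (Fin n → X) → ℝ), P n f = P (n + k) (cylExt f)

/-- Time consistency of a family of count lower previsions on the `𝒩^n`. -/
def QTimeConsistent {X : Type*} [Fintype X] [DecidableEq X] (Q : ∀ n : ℕ, (CVec X n → ℝ) → ℝ) : Prop :=
  ∀ n : ℕ, 1 ≤ n → ∀ (k : ℕ) (h : CVec X n → ℝ),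
    Q n h = Q (n + k) (fun μ => ∑ m : CVec X n, ((nuSub μ m : ℝ) * (nu m : ℝ) / (nu μ : ℝ)) * h m)

/-- The relative frequency vector `m/n ∈ Σ_X` of a count vector `m ∈ 𝒩^n`, `n ≥ 1`. -/
noncomputable def freqPt {X : Type*} [Fintype X] {n : ℕ} (hn : 0 < n) (m : CVec X n) :
    SimplexPt X :=
  ⟨fun x => (m.1 x : ℝ) / n,
   fun x => div_nonneg (Nat.cast_nonneg _) (Nat.cast_nonneg _),
   by
    rw [← Finset.sum_div]
    have h : (∑ x, (m.1 x : ℝ)) = (n : ℝ) := by exact_mod_cast m.2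
    rw [h]
    exact div_self (Nat.cast_ne_zero.mpr hn.ne')⟩

/-- `ḡ(μ) = ∑_m (ν(m) ν(μ−m) / ν(μ)) g(m)`. -/
noncomputable def gbar {X : Type*} [Fintype X] [DecidableEq X] {n k : ℕ}
    (g : CVec X n → ℝ) (μ : CVec X (n + k)) : ℝ :=
  ∑ m : CVec X n, ((nu m : ℝ) * (nuSub μ m : ℝ) / (nu μ : ℝ)) * g m

/-- Count map is invariant under permutations. -/
lemma countMap_perm_aux {X : Type*} [Fintype X] [DecidableEq X] {N : ℕ}
    (z : Fin N → X) (π : Equiv.Perm (Fin N)) :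
    countMap N (fun k => z (π k)) = countMap N z := by
  apply Subtype.ext; funext x
  simp only [countMap]
  refine Finset.card_equiv π ?_
  simp

/-- The stabilizer-type equiv: permutations carrying `z` to `z'` correspond to families of
fiber bijections. -/
def permFiberEquiv {X : Type*} [DecidableEq X] {N : ℕ} (z z' : Fin N → X) :
    {π : Equiv.Perm (Fin N) // (fun k => z (π k)) = z'} ≃
      (∀ x : X, {k // z' k = x} ≃ {k // z k = x}) where
  toFun π x := Equiv.subtypeEquiv π.1 (fun k => by rw [congrFun π.2 k])
  invFun E := ⟨(Equiv.sigmaFiberEquiv z').symm.trans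
      ((Equiv.sigmaCongrRight E).trans (Equiv.sigmaFiberEquiv z)), by
    funext k
    exact (E (z' k) ⟨k, rfl⟩).2⟩
  left_inv π := Subtype.ext (Equiv.ext fun k => rfl)
  right_inv E := by
    funext x
    apply Equiv.ext
    rintro ⟨k, rfl⟩
    rfl

/-- Cardinality of the set of permutations mapping `z` onto `z'`. -/
lemma fiber_card_aux {X : Type*} [Fintype X] [DecidableEq X] {N : ℕ}
    (z z' : Fin N → X) (h : countMap N z' = countMap N z) :
    (Finset.univ.filter fun π : Equiv.Perm (Fin N) => (fun k => z (π k)) = z').card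
      = ∏ x, Nat.factorial ((countMap N z).1 x) := by
  classical
  rw [← Fintype.card_subtype]
  rw [Fintype.card_congr (permFiberEquiv z z')]
  rw [Fintype.card_pi]
  refine Finset.prod_congr rfl fun x _ => ?_
  have hz : Fintype.card {k // z k = x} = (countMap N z).1 x := by
    simp [countMap, Fintype.card_subtype]
  have hz' : Fintype.card {k // z' k = x} = (countMap N z).1 x := by
    rw [Fintype.card_subtype, ← h]
    rfl
  rw [Fintype.card_equiv (Fintype.equivOfCardEq (hz'.trans hz.symm)), hz']

/-- The permutation sum of `f` at `z` in terms of the sum over the invariant atom. -/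
lemma perm_sum_aux {X : Type*} [Fintype X] [DecidableEq X] {N : ℕ}
    (f : (Fin N → X) → ℝ) (z : Fin N → X) :
    ∑ π : Equiv.Perm (Fin N), f (fun k => z (π k)) =
      (∏ x, Nat.factorial ((countMap N z).1 x) : ℕ) *
        ∑ z' ∈ Finset.univ.filter fun z' => countMap N z' = countMap N z, f z' := by
  classical
  rw [← Finset.sum_fiberwise_of_maps_to
    (g := fun π : Equiv.Perm (Fin N) => (fun k => z (π k)))
    (t := Finset.univ.filter fun z' => countMap N z' = countMap N z)
    (fun π _ => by simp [countMap_perm_aux z π]) (fun π => f (fun k => z (π k)))]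
  rw [Finset.mul_sum]
  refine Finset.sum_congr rfl fun z' hz' => ?_
  have hz'2 : countMap N z' = countMap N z := by simpa using hz'
  calc (∑ π ∈ Finset.univ.filter
        fun π : Equiv.Perm (Fin N) => (fun k => z (π k)) = z', f fun k => z (π k))
      = ∑ π ∈ Finset.univ.filter
        fun π : Equiv.Perm (Fin N) => (fun k => z (π k)) = z', f z' :=
        Finset.sum_congr rfl fun π hπ => by rw [(Finset.mem_filter.1 hπ).2]
    _ = _ := by
        rw [Finset.sum_const, fiber_card_aux z z' hz'2, nsmul_eq_mul]

/-- `N! · MuHy f (T z) = ∑_π f (z∘π)`. -/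
lemma muHy_perm_avg {X : Type*} [Fintype X] [DecidableEq X] {N : ℕ}
    (f : (Fin N → X) → ℝ) (z : Fin N → X) :
    (N.factorial : ℝ) * MuHy f (countMap N z) =
      ∑ π : Equiv.Perm (Fin N), f (fun k => z (π k)) := by
  classical
  rw [perm_sum_aux f z, MuHy]
  have hν : (0 : ℝ) < (nu (countMap N z) : ℝ) := by
    exact_mod_cast Nat.multinomial_pos _ _
  have hspec : (∏ x, Nat.factorial ((countMap N z).1 x)) * nu (countMap N z) = N.factorial := by
    have := Nat.multinomial_spec (Finset.univ) (countMap N z).1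
    rwa [(countMap N z).2] at this
  field_simp
  rw [← hspec]
  push_cast
  ring

/-- Superadditivity over finite sums for a coherent lower prevision. -/
lemma coherent_sum_le {Ω : Type*} [Fintype Ω] [Nonempty Ω] {P : (Ω → ℝ) → ℝ}
    (hP : LowerPrevCoherent P) {ι : Type*} (s : Finset ι) (F : ι → (Ω → ℝ)) :
    ∑ i ∈ s, P (F i) ≤ P (∑ i ∈ s, F i) := by
  classical
  have hP0 : P 0 = 0 := by
    have := hP.2.1 0 0 le_rfl
    simpa [Pi.zero_def] using this
  induction s using Finset.cons_induction with
  | empty => simp [hP0]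
  | cons a s ha ih =>
    rw [Finset.sum_cons, Finset.sum_cons]
    calc P (F a) + ∑ i ∈ s, P (F i) ≤ P (F a) + P (∑ i ∈ s, F i) := by linarith
      _ ≤ P (F a + ∑ i ∈ s, F i) := hP.2.2 _ _

/-- a coherent exchangeable lower prevision is determined by its count
distribution: `P(f) = Q(MuHy^N(f|·))`. -/
theorem stmt4 {X : Type*} [Fintype X] [DecidableEq X] [Nonempty X] {N : ℕ} (hN : 1 ≤ N)
    (P : ((Fin N → X) → ℝ) → ℝ)
    (hP : LowerPrevCoherent P) (hex : Exchangeable P)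
    (Q : (CVec X N → ℝ) → ℝ)
    (hQ : ∀ h : CVec X N → ℝ, Q h = P (fun z => h (countMap N z))) :
    ∀ f : (Fin N → X) → ℝ, P f = Q (fun m => MuHy f m) := by
  classical
  intro f
  rw [hQ]
  set g : (Fin N → X) → ℝ := fun z => MuHy f (countMap N z) with hg
  have hNfac : (0 : ℝ) < (N.factorial : ℝ) := by exact_mod_cast N.factorial_pos
  -- exchangeability in both directions
  have hex1 : ∀ π : Equiv.Perm (Fin N),
      0 ≤ P (fun z => f (fun k => z (π k)) - f z) := fun π => hex f π
  have hex2 : ∀ π : Equiv.Perm (Fin N),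
      0 ≤ P (fun z => f z - f (fun k => z (π k))) := by
    intro σ
    have h := hex (fun x => f fun k => x (σ k)) σ⁻¹
    simpa using h
  -- P (g - f) ≥ 0
  have key : ∀ z, (N.factorial : ℝ) * (g z - f z) =
      ∑ π : Equiv.Perm (Fin N), (f (fun k => z (π k)) - f z) := by
    intro z
    rw [Finset.sum_sub_distrib, Finset.sum_const, ← muHy_perm_avg f z]
    simp [hg, Fintype.card_perm, mul_sub, nsmul_eq_mul]
  have key' : ∀ z, (N.factorial : ℝ) * (f z - g z) =
      ∑ π : Equiv.Perm (Fin N), (f z - f (fun k => z (π k))) := by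
    intro z
    have := key z
    rw [Finset.sum_sub_distrib] at this ⊢
    linarith
  have hgf : 0 ≤ P (g - f) := by
    have heq : (g - f) = fun z => ((N.factorial : ℝ))⁻¹ *
        (∑ π : Equiv.Perm (Fin N), fun z' => f (fun k => z' (π k)) - f z') z := by
      funext z
      rw [Finset.sum_apply]
      rw [← key z]
      field_simp [Pi.sub_apply]
      rfl
    rw [heq, hP.2.1 _ _ (by positivity)]
    have h1 : (0:ℝ) ≤ ∑ π : Equiv.Perm (Fin N),
        P (fun z' => f (fun k => z' (π k)) - f z') :=
      Finset.sum_nonneg fun π _ => hex1 π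
    have h2 := coherent_sum_le hP Finset.univ
      (fun π : Equiv.Perm (Fin N) => fun z' => f (fun k => z' (π k)) - f z')
    exact mul_nonneg (inv_nonneg.2 hNfac.le) (h1.trans h2)
  have hfg : 0 ≤ P (f - g) := by
    have heq : (f - g) = fun z => ((N.factorial : ℝ))⁻¹ *
        (∑ π : Equiv.Perm (Fin N), fun z' => f z' - f (fun k => z' (π k))) z := by
      funext z
      rw [Finset.sum_apply]
      rw [← key' z]
      field_simp [Pi.sub_apply]
      rfl
    rw [heq, hP.2.1 _ _ (by positivity)]
    have h1 : (0:ℝ) ≤ ∑ π : Equiv.Perm (Fin N),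
        P (fun z' => f z' - f (fun k => z' (π k))) :=
      Finset.sum_nonneg fun π _ => hex2 π
    have h2 := coherent_sum_le hP Finset.univ
      (fun π : Equiv.Perm (Fin N) => fun z' => f z' - f (fun k => z' (π k)))
    exact mul_nonneg (inv_nonneg.2 hNfac.le) (h1.trans h2)
  have h1 : P f ≤ P g := by
    have := hP.2.2 f (g - f)
    rw [show f + (g - f) = g by ring] at this
    linarith
  have h2 : P g ≤ P f := by
    have := hP.2.2 g (f - g)
    rw [show g + (f - g) = f by ring] at this
    linarith
  exact le_antisymm h1 h2
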